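/- The packing dimension of C_{s,𝒟} equals limsup_n (−n ln N)/ln(s_n). -/

import Mathlib

open scoped ENNReal NNReal

/-- The `δ`-packing pre-measure: supremum of `∑ h(2rᵢ)` over countable disjoint families
of open balls with centers in `E` and radii at most `δ` (balls of radius `0` are empty
and serve as padding). -/
noncomputable def packPreδ {X : Type*} [PseudoMetricSpace X] (h : ℝ → ℝ) (E : Set X)
    (δ : ℝ) : ℝ≥0∞ :=
  ⨆ (x : ℕ → X) (r : ℕ → ℝ) (_ : ∀ i, x i ∈ E) (_ : ∀ i, 0 ≤ r i ∧ r i ≤ δ)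
    (_ : Pairwise (Function.onFun Disjoint fun i => Metric.ball (x i) (r i))),
    ∑' i, ENNReal.ofReal (h (2 * r i))

/-- The `h`-packing pre-measure `𝒫^h₀(E) = lim_{δ→0} 𝒫^h_δ(E)`. -/
noncomputable def packPre {X : Type*} [PseudoMetricSpace X] (h : ℝ → ℝ) (E : Set X) : ℝ≥0∞ :=
  ⨅ (δ : ℝ) (_ : 0 < δ), packPreδ h E δ

/-- The `h`-packing measure `𝒫^h(E) = inf {∑ᵢ 𝒫^h₀(Eᵢ) : E ⊆ ⋃ᵢ Eᵢ}`. -/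
noncomputable def packMeasure {X : Type*} [PseudoMetricSpace X] (h : ℝ → ℝ) (E : Set X) : ℝ≥0∞ :=
  ⨅ (c : ℕ → Set X) (_ : E ⊆ ⋃ i, c i), ∑' i, packPre h (c i)
/-- The packing dimension, defined from the packing measures `𝒫^b` (gauge `x ↦ x^b`). -/
noncomputable def packDim {X : Type*} [PseudoMetricSpace X] (E : Set X) : ℝ≥0∞ :=
  ⨆ (b : ℝ≥0) (_ : packMeasure (fun x => x ^ (b : ℝ)) E = ⊤), (b : ℝ≥0∞)

open Metric Filter Set

set_option maxHeartbeats 2000000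

lemma disj_ball_dist {X : Type*} [NormedAddCommGroup X] [NormedSpace ℝ X]
    {x y : X} {r r' : ℝ} (hr : 0 < r) (hr' : 0 < r')
    (h : Disjoint (ball x r) (ball y r')) : r + r' ≤ dist x y := by
  by_contra hlt
  push_neg at hlt
  have hs : 0 < r + r' := by linarith
  set c := r / (r + r') with hc
  have hc0 : 0 ≤ c := by positivity
  have hc1 : c ≤ 1 := by rw [hc, div_le_one hs]; linarith
  set z := x + c • (y - x) with hz
  have hzx : ‖z - x‖ = c * ‖y - x‖ := by
    have : z - x = c • (y - x) := by rw [hz]; abel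
    rw [this, norm_smul, Real.norm_eq_abs, abs_of_nonneg hc0]
  have hzy : ‖z - y‖ = (1 - c) * ‖y - x‖ := by
    have : z - y = (1 - c) • (x - y) := by
      rw [hz, sub_smul, one_smul]; module
    rw [this, norm_smul, Real.norm_eq_abs, abs_of_nonneg (by linarith), norm_sub_rev]
  have hd : ‖y - x‖ < r + r' := by rw [← norm_sub_rev, ← dist_eq_norm]; exact hlt
  have hnn : 0 ≤ ‖y - x‖ := norm_nonneg _
  have h1 : z ∈ ball x r := by
    rw [mem_ball, dist_eq_norm, hzx, hc]
    rcases eq_or_lt_of_le hnn with h0 | h0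
    · rw [← h0]; simpa using hr
    · calc r / (r + r') * ‖y - x‖ < r / (r + r') * (r + r') := by
            apply mul_lt_mul_of_pos_left hd (by positivity)
        _ = r := by field_simp
  have h2 : z ∈ ball y r' := by
    rw [mem_ball, dist_eq_norm, hzy]
    have h1c : 1 - c = r' / (r + r') := by rw [hc]; field_simp; ring
    rw [h1c]
    rcases eq_or_lt_of_le hnn with h0 | h0
    · rw [← h0]; simpa using hr'
    · calc r' / (r + r') * ‖y - x‖ < r' / (r + r') * (r + r') := by
            apply mul_lt_mul_of_pos_left hd (by positivity)
        _ = r' := by field_simp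
  exact (h.ne_of_mem h1 h2) rfl


lemma packPreδ_empty {X : Type*} [PseudoMetricSpace X] (h : ℝ → ℝ) (δ : ℝ) :
    packPreδ h (∅ : Set X) δ = 0 := by
  refine le_antisymm ?_ (zero_le)
  refine iSup_le fun x => iSup_le fun r => iSup_le fun hx => absurd (hx 0) (Set.notMem_empty _)

lemma packPre_empty {X : Type*} [PseudoMetricSpace X] (h : ℝ → ℝ) :
    packPre h (∅ : Set X) = 0 := by
  refine le_antisymm ?_ (zero_le)
  refine le_trans (iInf_le _ 1) ?_
  refine le_trans (iInf_le _ one_pos) ?_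
  rw [packPreδ_empty]

lemma packMeasure_le_packPre {X : Type*} [PseudoMetricSpace X] (h : ℝ → ℝ) (E : Set X) :
    packMeasure h E ≤ packPre h E := by
  have hc : E ⊆ ⋃ i, (if i = 0 then E else (∅ : Set X)) := by
    intro x hx
    exact Set.mem_iUnion.2 ⟨0, by simpa using hx⟩
  refine le_trans (iInf_le _ (fun i => if i = 0 then E else ∅)) ?_
  refine le_trans (iInf_le _ hc) ?_
  rw [tsum_eq_single 0 (fun b hb => by simp [hb, packPre_empty])]
  simp



/-- The packing dimension of `C_{s,𝒟}` equals
`limsup_n (−n ln N)/ln(sₙ)`.  Here `Rₙ = ∑_{i ≥ n} sᵢ` is the tail of the series after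
the first `n` terms and the separation condition `κRₙ₊₁ ≤ M τ sₙ`, `M < 1`, holds. -/
theorem stmt_15 (p N : ℕ) (hN : 2 ≤ N)
    (s : ℕ → ℝ) (hs : ∀ n, 0 < s n) (hsum : Summable s)
    (d : ℕ → Fin N → EuclideanSpace ℝ (Fin p))
    (hzero : ∀ n, d n ⟨0, by omega⟩ = 0)
    (κ τ : ℝ) (hτ : 0 < τ)
    (hκ : ∀ (n : ℕ) (i j : Fin N), i ≠ j → ‖d n i - d n j‖ ≤ κ)
    (hτd : ∀ (n : ℕ) (i j : Fin N), i ≠ j → τ ≤ ‖d n i - d n j‖)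
    (R : ℕ → ℝ) (hR : ∀ n, R n = ∑' i, s (n + i))
    (M : ℝ) (hM : M < 1) (hsep : ∀ n, κ * R (n + 1) ≤ M * (τ * s n)) :
    packDim (Set.range fun σ : ℕ → Fin N => ∑' i, s i • d i (σ i))
      = Filter.atTop.limsup
          (fun n : ℕ => ENNReal.ofReal (-((n : ℝ) * Real.log N) / Real.log (s n))) := by
  classical
  have hN0 : 0 < N := by omega
  set f : (ℕ → Fin N) → EuclideanSpace ℝ (Fin p) := fun σ => ∑' i, s i • d i (σ i) with hfdef
  have hij : (⟨0, by omega⟩ : Fin N) ≠ ⟨1, by omega⟩ := Fin.ne_of_val_ne (by norm_num)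
  have hτκ : τ ≤ κ := le_trans (hτd 0 _ _ hij) (hκ 0 _ _ hij)
  have hκ0 : 0 < κ := lt_of_lt_of_le hτ hτκ
  have hdbd : ∀ n (b : Fin N), ‖d n b‖ ≤ κ := by
    intro n b
    by_cases hb : b = ⟨0, by omega⟩
    · rw [hb, hzero]; simpa using hκ0.le
    · have := hκ n b ⟨0, by omega⟩ hb
      rwa [hzero, sub_zero] at this
  have hSsum : ∀ σ : ℕ → Fin N, Summable fun i => s i • d i (σ i) := by
    intro σ
    apply Summable.of_norm
    refine Summable.of_nonneg_of_le (fun i => norm_nonneg _) (fun i => ?_) (hsum.mul_right κ)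
    rw [norm_smul, Real.norm_eq_abs, abs_of_pos (hs i)]
    exact mul_le_mul_of_nonneg_left (hdbd i _) (hs i).le
  have hRsum : ∀ n, Summable fun i => s (n + i) := by
    intro n
    exact ((summable_nat_add_iff n).2 hsum).congr fun i => by rw [add_comm]
  have hRpos : ∀ n, 0 < R n := by
    intro n; rw [hR n]
    exact Summable.tsum_pos (hRsum n) (fun i => (hs _).le) 0 (hs _)
  have hRrec : ∀ n, R n = s n + R (n + 1) := by
    intro n
    rw [hR n, hR (n+1), Summable.tsum_eq_zero_add (hRsum n), Nat.add_zero]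
    congr 1
    exact tsum_congr fun i => congrArg s (by omega)
  have hM0 : 0 < M := by
    have h1 := hsep 0
    have h2 : 0 < κ * R 1 := mul_pos hκ0 (hRpos 1)
    nlinarith [mul_pos hτ (hs 0)]
  have hRM : ∀ n, R (n + 1) ≤ M * s n := by
    intro n
    have h1 : κ * R (n+1) ≤ κ * (M * s n) := by
      refine le_trans (hsep n) ?_
      have : τ * s n ≤ κ * s n := mul_le_mul_of_nonneg_right hτκ (hs n).le
      nlinarith
    exact le_of_mul_le_mul_left h1 hκ0
  have hsleR : ∀ n, s n ≤ R n := fun n => by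
    have := hRpos (n+1); rw [hRrec n]; linarith
  have hsle : ∀ n, s (n + 1) ≤ M * s n := fun n => le_trans (hsleR (n+1)) (hRM n)
  have hsanti : Antitone s := antitone_nat_of_succ_le fun n =>
    le_trans (hsle n) (by nlinarith [hs n])
  have hRanti : Antitone R := antitone_nat_of_succ_le fun n => by
    rw [hRrec n]; nlinarith [hs n]
  have hspow : ∀ n, s n ≤ M ^ n * s 0 := by
    intro n
    induction n with
    | zero => simp
    | succ k ih =>
      calc s (k+1) ≤ M * s k := hsle k
        _ ≤ M * (M ^ k * s 0) := by nlinarith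
        _ = M ^ (k+1) * s 0 := by ring
  have hRpowk : ∀ a k, R (a + k) ≤ M ^ k * R a := by
    intro a k
    induction k with
    | zero => simp
    | succ k ih =>
      have h1 : R (a + (k+1)) ≤ M * s (a+k) := hRM (a+k)
      have h2 : s (a+k) ≤ R (a+k) := hsleR _
      calc R (a + (k+1)) ≤ M * R (a+k) := by nlinarith
        _ ≤ M * (M ^ k * R a) := by nlinarith [hRpos (a+k)]
        _ = M ^ (k+1) * R a := by ring
  have hRpow : ∀ n, R n ≤ M ^ n * R 0 := fun n => by simpa using hRpowk 0 n
  have hRles : ∀ n, R n ≤ (1 + M) * s n := fun n => by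
    have := hRM n; rw [hRrec n]; nlinarith
  -- difference of expansions
  have hgsum : ∀ σ σ' : ℕ → Fin N, Summable fun i => s i • d i (σ i) - s i • d i (σ' i) :=
    fun σ σ' => (hSsum σ).sub (hSsum σ')
  have hgbd : ∀ (σ σ' : ℕ → Fin N) i, ‖s i • d i (σ i) - s i • d i (σ' i)‖ ≤ s i * κ := by
    intro σ σ' i
    rw [← smul_sub, norm_smul, Real.norm_eq_abs, abs_of_pos (hs i)]
    by_cases h : σ i = σ' i
    · rw [h]; simp only [sub_self, norm_zero, mul_zero]; exact mul_nonneg (hs i).le hκ0.le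
    · exact mul_le_mul_of_nonneg_left (hκ i _ _ h) (hs i).le
  have hgnsum : ∀ σ σ' : ℕ → Fin N, Summable fun i => ‖s i • d i (σ i) - s i • d i (σ' i)‖ :=
    fun σ σ' => Summable.of_nonneg_of_le (fun i => norm_nonneg _) (hgbd σ σ') (hsum.mul_right κ)
  have hfsub : ∀ σ σ', f σ - f σ' = ∑' i, (s i • d i (σ i) - s i • d i (σ' i)) :=
    fun σ σ' => (Summable.tsum_sub (hSsum σ) (hSsum σ')).symm
  have htail : ∀ (σ σ' : ℕ → Fin N) n,
      ‖∑' i, (s (i+n) • d (i+n) (σ (i+n)) - s (i+n) • d (i+n) (σ' (i+n)))‖ ≤ κ * R n := by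
    intro σ σ' n
    have h1 : Summable fun i => ‖s (i+n) • d (i+n) (σ (i+n)) - s (i+n) • d (i+n) (σ' (i+n))‖ :=
      (summable_nat_add_iff n).2 (hgnsum σ σ')
    refine le_trans (norm_tsum_le_tsum_norm h1) ?_
    have h2 : Summable fun i => s (i + n) * κ :=
      ((summable_nat_add_iff n).2 hsum).mul_right κ
    refine le_trans (Summable.tsum_le_tsum (fun i => hgbd σ σ' (i+n)) h1 h2) ?_
    rw [tsum_mul_right]
    have : ∑' i, s (i + n) = R n := by
      rw [hR n]; exact tsum_congr fun i => congrArg s (by omega)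
    rw [this, mul_comm]
  have hdistle : ∀ (σ σ' : ℕ → Fin N) n, (∀ i, i < n → σ i = σ' i) →
      ‖f σ - f σ'‖ ≤ κ * R n := by
    intro σ σ' n hagree
    rw [hfsub]
    rw [← Summable.sum_add_tsum_nat_add n (hgsum σ σ')]
    have hz : ∑ i ∈ Finset.range n, (s i • d i (σ i) - s i • d i (σ' i)) = 0 := by
      apply Finset.sum_eq_zero
      intro i hi
      rw [hagree i (Finset.mem_range.1 hi)]; simp
    rw [hz, zero_add]
    exact htail σ σ' n
  have hdistge : ∀ (σ σ' : ℕ → Fin N) k, (∀ i, i < k → σ i = σ' i) → σ k ≠ σ' k →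
      (1 - M) * (τ * s k) ≤ ‖f σ - f σ'‖ := by
    intro σ σ' k hagree hk
    rw [hfsub]
    rw [← Summable.sum_add_tsum_nat_add (k+1) (hgsum σ σ')]
    set T := ∑' i, (s (i+(k+1)) • d (i+(k+1)) (σ (i+(k+1))) - s (i+(k+1)) • d (i+(k+1)) (σ' (i+(k+1)))) with hT
    have hsum1 : ∑ i ∈ Finset.range (k+1), (s i • d i (σ i) - s i • d i (σ' i))
        = s k • d k (σ k) - s k • d k (σ' k) := by
      rw [Finset.sum_eq_single k]
      · intro i hi hik
        have : i < k := by have := Finset.mem_range.1 hi; omega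
        rw [hagree i this]; simp
      · intro h; exact absurd (Finset.self_mem_range_succ k) h
    rw [hsum1]
    have hTbd : ‖T‖ ≤ κ * R (k+1) := htail σ σ' (k+1)
    have hgk : s k * τ ≤ ‖s k • d k (σ k) - s k • d k (σ' k)‖ := by
      rw [← smul_sub, norm_smul, Real.norm_eq_abs, abs_of_pos (hs k)]
      exact mul_le_mul_of_nonneg_left (hτd k _ _ hk) (hs k).le
    have htri : ‖s k • d k (σ k) - s k • d k (σ' k)‖ - ‖T‖
        ≤ ‖s k • d k (σ k) - s k • d k (σ' k) + T‖ := by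
      have := norm_add_le (s k • d k (σ k) - s k • d k (σ' k) + T) (-T)
      simp only [add_neg_cancel_right, norm_neg] at this
      linarith
    have := hsep k
    nlinarith
  have hcont : Continuous f := by
    apply continuous_tsum (u := fun i => s i * κ)
    · intro i
      exact (Continuous.comp continuous_of_discreteTopology (continuous_apply i)).const_smul (s i)
    · exact hsum.mul_right κ
    · intro n σ
      rw [norm_smul, Real.norm_eq_abs, abs_of_pos (hs n)]
      exact mul_le_mul_of_nonneg_left (hdbd n _) (hs n).le
  have hEcomp : IsCompact (Set.range f) := isCompact_range hcont
  set E := Set.range f with hEdef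
  set u : ℕ → ℝ≥0∞ := fun n => ENNReal.ofReal (-((n : ℝ) * Real.log N) / Real.log (s n)) with hudef
  set L := Filter.atTop.limsup u with hLdef
  have hMtend : Filter.Tendsto (fun n => M ^ n * s 0) Filter.atTop (nhds 0) := by
    have := (tendsto_pow_atTop_nhds_zero_of_lt_one hM0.le hM).mul_const (s 0)
    simpa using this
  have hstend : Filter.Tendsto s Filter.atTop (nhds 0) :=
    squeeze_zero (fun n => (hs n).le) hspow hMtend
  have hRtend : Filter.Tendsto R Filter.atTop (nhds 0) := by
    refine squeeze_zero (fun n => (hRpos n).le) hRpow ?_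
    have := (tendsto_pow_atTop_nhds_zero_of_lt_one hM0.le hM).mul_const (R 0)
    simpa using this
  have hUpper : ∀ b : ℝ≥0, L < (b : ℝ≥0∞) →
      packMeasure (fun x => x ^ (b : ℝ)) E ≠ ⊤ := by
    intro b hb
    have hLtop : L ≠ ⊤ := hb.ne_top
    have hb0 : (0:ℝ) < (b:ℝ) := by
      rcases eq_or_lt_of_le (show (0:ℝ≥0) ≤ b from zero_le) with h | h
      · exfalso; rw [← h] at hb; exact (not_lt_of_ge (show (0:ℝ≥0∞) ≤ L from zero_le)) (by simpa using hb)
      · exact_mod_cast h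
    set b' : ℝ := (L.toReal + (b:ℝ)) / 2 with hb'def
    have hLb : L.toReal < (b:ℝ) := by
      have := (ENNReal.toReal_lt_toReal hLtop ENNReal.coe_ne_top).2 hb
      simpa using this
    have hb'0 : 0 < b' := by
      have := ENNReal.toReal_nonneg (a := L); rw [hb'def]; linarith
    have hb'b : b' < (b:ℝ) := by rw [hb'def]; linarith
    have hLb' : L < ENNReal.ofReal b' := by
      conv_lhs => rw [← ENNReal.ofReal_toReal hLtop]
      exact (ENNReal.ofReal_lt_ofReal_iff hb'0).2 (by rw [hb'def]; linarith)
    have hev : ∀ᶠ n in Filter.atTop, u n < ENNReal.ofReal b' :=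
      Filter.eventually_lt_of_limsup_lt hLb'
    have hslt1 : ∀ᶠ n in Filter.atTop, s n < 1 :=
      hstend.eventually_lt_const (by norm_num)
    obtain ⟨n0, hn0⟩ := Filter.eventually_atTop.1 (hev.and hslt1)
    have hlogN : 0 ≤ Real.log N := Real.log_nonneg (by exact_mod_cast (by omega : 1 ≤ N))
    have hkey : ∀ n, n0 ≤ n → (N:ℝ) ^ n ≤ s n ^ (-b') := by
      intro n hn
      obtain ⟨h1, h2⟩ := hn0 n hn
      have hlogs : Real.log (s n) < 0 := Real.log_neg (hs n) h2
      rw [hudef] at h1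
      simp only [hudef] at h1
      have h3 : -((n : ℝ) * Real.log N) / Real.log (s n) < b' :=
        (ENNReal.ofReal_lt_ofReal_iff hb'0).1 h1
      have h4 : (n : ℝ) * Real.log N < b' * (-Real.log (s n)) := by
        have h5 : -((n : ℝ) * Real.log N) / Real.log (s n)
            = ((n : ℝ) * Real.log N) / (-Real.log (s n)) := by
          rw [div_neg, neg_div]
        rw [h5] at h3
        exact (div_lt_iff₀ (by linarith)).1 h3
      have h6 : (N:ℝ) ^ n = Real.exp ((n:ℝ) * Real.log N) := by
        rw [Real.exp_nat_mul, Real.exp_log (by positivity)]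
      have h7 : s n ^ (-b') = Real.exp (b' * (-Real.log (s n))) := by
        rw [Real.rpow_def_of_pos (hs n)]; ring_nf
      rw [h6, h7]
      exact Real.exp_le_exp.2 h4.le
    obtain ⟨k0, hk0⟩ : ∃ k0, κ * M ^ k0 ≤ 2 := by
      have h1 := (tendsto_pow_atTop_nhds_zero_of_lt_one hM0.le hM).const_mul κ
      simp only [mul_zero] at h1
      obtain ⟨k0, hk⟩ := Filter.eventually_atTop.1 (h1.eventually_lt_const (by norm_num : (0:ℝ) < 2))
      exact ⟨k0, (hk k0 le_rfl).le⟩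
    set n1 := max n0 1 with hn1def
    set δ := R n1 with hδdef
    have hδ0 : 0 < δ := hRpos n1
    set e := (b:ℝ) - b' with hedef
    have he0 : 0 < e := by rw [hedef]; linarith
    set q := M ^ e with hqdef
    have hq0 : 0 < q := Real.rpow_pos_of_pos hM0 e
    have hq1 : q < 1 := Real.rpow_lt_one hM0.le hM he0
    have hNR : (0:ℝ) < (N:ℝ) := by exact_mod_cast hN0
    set Cr := (N:ℝ)^(1+k0) * 2 ^ (b:ℝ) * (1+M) ^ b' * (R 0) ^ e with hCrdef
    have hCr0 : 0 < Cr := by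
      rw [hCrdef]
      exact mul_pos (mul_pos (mul_pos (pow_pos hNR _) (Real.rpow_pos_of_pos two_pos _))
        (Real.rpow_pos_of_pos (by linarith) _)) (Real.rpow_pos_of_pos (hRpos 0) _)
    have hchain : ∀ n, n1 ≤ n → (N:ℝ)^(n+1+k0) * (2 * R n) ^ (b:ℝ) ≤ Cr * q ^ n := by
      intro n hn
      have hn0n : n0 ≤ n := le_trans (le_max_left _ _) hn
      have hRn := hRpos n
      have hsn := hs n
      have step1 : (R n) ^ b' ≤ (1+M) ^ b' * (s n) ^ b' := by
        rw [← Real.mul_rpow (by linarith) hsn.le]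
        exact Real.rpow_le_rpow hRn.le (hRles n) hb'0.le
      have step2 : (R n) ^ e ≤ (R 0) ^ e * q ^ n := by
        have h1 : (R n) ^ e ≤ (M ^ n * R 0) ^ e :=
          Real.rpow_le_rpow hRn.le (hRpow n) he0.le
        have h2 : ((M:ℝ) ^ n * R 0) ^ e = q ^ n * (R 0) ^ e := by
          rw [Real.mul_rpow (by positivity) (hRpos 0).le]
          congr 1
          rw [hqdef, ← Real.rpow_natCast M n, ← Real.rpow_mul hM0.le, mul_comm,
            Real.rpow_mul hM0.le, Real.rpow_natCast]
        rw [h2] at h1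
        exact le_trans h1 (le_of_eq (by ring))
      have step3 : (N:ℝ)^n * (s n) ^ b' ≤ 1 := by
        have h1 := hkey n hn0n
        have h2 : (N:ℝ)^n * (s n)^b' ≤ (s n)^(-b') * (s n)^b' :=
          mul_le_mul_of_nonneg_right h1 (Real.rpow_nonneg hsn.le b')
        rwa [← Real.rpow_add hsn, neg_add_cancel, Real.rpow_zero] at h2
      have hrnsplit : (R n) ^ (b:ℝ) = (R n)^b' * (R n)^e := by
        rw [← Real.rpow_add hRn]
        congr 1
        rw [hedef]; ring
      have hpowsplit : (N:ℝ)^(n+1+k0) = (N:ℝ)^(1+k0) * (N:ℝ)^n := by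
        rw [← pow_add]
        congr 1
        omega
      have hA : (N:ℝ)^n * (R n)^b' ≤ (1+M)^b' := by
        calc (N:ℝ)^n * (R n)^b' ≤ (N:ℝ)^n * ((1+M)^b' * (s n)^b') :=
              mul_le_mul_of_nonneg_left step1 (by positivity)
          _ = (1+M)^b' * ((N:ℝ)^n * (s n)^b') := by ring
          _ ≤ (1+M)^b' * 1 :=
              mul_le_mul_of_nonneg_left step3 (Real.rpow_nonneg (by linarith) _)
          _ = (1+M)^b' := mul_one _
      have hB : ((N:ℝ)^n * (R n)^b') * (R n)^e ≤ (1+M)^b' * ((R 0)^e * q^n) :=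
        mul_le_mul hA step2 (Real.rpow_nonneg hRn.le e)
          (Real.rpow_nonneg (by linarith) _)
      calc (N:ℝ)^(n+1+k0) * (2 * R n) ^ (b:ℝ)
          = ((N:ℝ)^(1+k0) * 2^(b:ℝ)) * (((N:ℝ)^n * (R n)^b') * (R n)^e) := by
            rw [hpowsplit, Real.mul_rpow (by norm_num) hRn.le, hrnsplit]; ring
        _ ≤ ((N:ℝ)^(1+k0) * 2^(b:ℝ)) * ((1+M)^b' * ((R 0)^e * q^n)) :=
            mul_le_mul_of_nonneg_left hB (by positivity)
        _ = Cr * q ^ n := by rw [hCrdef]; ring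
    have hsum_geo : Summable (fun n : ℕ => Cr * q ^ n) :=
      (summable_geometric_of_lt_one hq0.le hq1).mul_left Cr
    have hfin : packPreδ (fun x => x ^ (b:ℝ)) E δ ≤ ENNReal.ofReal (∑' n, Cr * q ^ n) := by
      rw [packPreδ]
      refine iSup_le fun x => iSup_le fun r => iSup_le fun hxE => iSup_le fun hrb =>
        iSup_le fun hdisj => ?_
      have hxE' : ∀ i, ∃ σ : ℕ → Fin N, f σ = x i := fun i => hxE i
      choose σs hσs using hxE'
      have hex : ∀ i, 0 < r i → ∃ n, R (n + 1) < r i := by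
        intro i hi
        obtain ⟨n, hn⟩ := (hRtend.eventually_lt_const hi).exists
        exact ⟨n, lt_of_le_of_lt (hRanti (Nat.le_succ n)) hn⟩
      classical
      set bin : ℕ → ℕ := fun i => if h : 0 < r i then Nat.find (hex i h) else 0 with hbin
      have hbinspec : ∀ i, 0 < r i → R (bin i + 1) < r i := by
        intro i h; rw [hbin]; simp only [dif_pos h]; exact Nat.find_spec (hex i h)
      have hbinmin : ∀ i, 0 < r i → ∀ m, m < bin i → r i ≤ R (m + 1) := by
        intro i h m hm; rw [hbin] at hm; simp only [dif_pos h] at hm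
        have h2 := Nat.find_min (hex i h) hm
        linarith [not_lt.1 h2]
      have hbinge : ∀ i, 0 < r i → n1 ≤ bin i := by
        intro i h
        by_contra hlt
        push_neg at hlt
        have h1 := hbinspec i h
        have h2 : r i ≤ R n1 := (hrb i).2
        have h3 : R n1 ≤ R (bin i + 1) := hRanti (by omega)
        linarith
      have hrleR : ∀ i, 0 < r i → r i ≤ R (bin i) := by
        intro i h
        have h1 : 1 ≤ bin i := le_trans (le_max_right n0 1) (hbinge i h)
        have h2 := hbinmin i h (bin i - 1) (by omega)
        have h3 : bin i - 1 + 1 = bin i := by omega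
        rwa [h3] at h2
      set S : ℕ → Set ℕ := fun n => {i | 0 < r i ∧ bin i = n} with hSdef
      have hinj : ∀ n, Set.InjOn (fun i => (fun t : Fin (n+1+k0) => σs i t)) (S n) := by
        intro n i hi j hj heq
        by_contra hne
        have hagree : ∀ t, t < n+1+k0 → σs i t = σs j t := fun t ht => congrFun heq ⟨t, ht⟩
        have hd1 : ‖f (σs i) - f (σs j)‖ ≤ κ * R (n+1+k0) := hdistle _ _ _ hagree
        have hd2 : R (n+1+k0) ≤ M ^ k0 * R (n+1) := hRpowk (n+1) k0
        have hd3 : κ * R (n+1+k0) ≤ 2 * R (n+1) := by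
          have hRn1 := hRpos (n+1)
          have hRn2 := hRpos (n+1+k0)
          have hMk : (0:ℝ) < M ^ k0 := pow_pos hM0 _
          nlinarith
        have hdisj' : Disjoint (Metric.ball (x i) (r i)) (Metric.ball (x j) (r j)) := hdisj hne
        have hddist := disj_ball_dist hi.1 hj.1 hdisj'
        rw [← hσs i, ← hσs j, dist_eq_norm] at hddist
        have h5 := hbinspec i hi.1
        have h6 := hbinspec j hj.1
        rw [hi.2] at h5
        rw [hj.2] at h6
        linarith
      have hSfin : ∀ n, (S n).Finite := fun n =>
        Set.Finite.of_finite_image (Set.toFinite _) (hinj n)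
      have hcard : ∀ n, (hSfin n).toFinset.card ≤ N ^ (n+1+k0) := by
        intro n
        have h1 := Finset.card_le_card_of_injOn (t := (Finset.univ : Finset (Fin (n+1+k0) → Fin N)))
          (fun i => (fun t : Fin (n+1+k0) => σs i t))
          (fun a _ => Finset.mem_univ _)
          (by intro a ha b hb hab
              exact hinj n ((hSfin n).mem_toFinset.1 (Finset.mem_coe.1 ha))
                ((hSfin n).mem_toFinset.1 (Finset.mem_coe.1 hb)) hab)
        simpa [Finset.card_univ, Fintype.card_fun] using h1
      have hterm0 : ∀ i, ¬ (0 < r i) → ENNReal.ofReal ((2 * r i) ^ (b:ℝ)) = 0 := by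
        intro i hi
        have h1 : r i = 0 := le_antisymm (not_lt.1 hi) (hrb i).1
        simp [h1, Real.zero_rpow hb0.ne']
      have hmain : (∑' i, ENNReal.ofReal ((2 * r i) ^ (b:ℝ)))
          ≤ ∑' (n : ℕ) (i : ℕ), (if i ∈ S n then ENNReal.ofReal ((2 * r i) ^ (b:ℝ)) else 0) := by
        rw [← ENNReal.tsum_comm]
        refine ENNReal.tsum_le_tsum fun i => ?_
        by_cases hi : 0 < r i
        · have hiS : i ∈ S (bin i) := ⟨hi, rfl⟩
          refine le_trans ?_ (ENNReal.le_tsum (bin i))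
          rw [if_pos hiS]
        · rw [hterm0 i hi]; exact zero_le
      have hinner : ∀ n, (∑' i : ℕ, (if i ∈ S n then ENNReal.ofReal ((2 * r i) ^ (b:ℝ)) else 0))
          ≤ (N:ℝ≥0∞) ^ (n+1+k0) * ENNReal.ofReal ((2 * R n) ^ (b:ℝ)) := by
        intro n
        rw [tsum_eq_sum (s := (hSfin n).toFinset)
          (fun i hi => if_neg (fun hS => hi ((hSfin n).mem_toFinset.2 hS)))]
        have hB : ∀ i ∈ (hSfin n).toFinset,
            (if i ∈ S n then ENNReal.ofReal ((2 * r i) ^ (b:ℝ)) else 0)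
              ≤ ENNReal.ofReal ((2 * R n) ^ (b:ℝ)) := by
          intro i hi
          have hiS := (hSfin n).mem_toFinset.1 hi
          rw [if_pos hiS]
          refine ENNReal.ofReal_le_ofReal ?_
          refine Real.rpow_le_rpow (by linarith [hiS.1.le]) ?_ hb0.le
          have h2 := hrleR i hiS.1
          rw [hiS.2] at h2
          linarith
        refine le_trans (Finset.sum_le_card_nsmul _ _ _ hB) ?_
        rw [nsmul_eq_mul]
        refine mul_le_mul_left ?_ _
        exact_mod_cast hcard n
      have hempty : ∀ n, n < n1 →
          (∑' i : ℕ, (if i ∈ S n then ENNReal.ofReal ((2 * r i) ^ (b:ℝ)) else 0)) = 0 := by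
        intro n hn
        have h1 : ∀ i : ℕ, (if i ∈ S n then ENNReal.ofReal ((2 * r i) ^ (b:ℝ)) else 0) = 0 := by
          intro i
          rw [if_neg]
          intro hiS
          have h2 := hbinge i hiS.1
          have h3 := hiS.2
          omega
        simp [h1]
      have hw : ∀ n : ℕ, (∑' i : ℕ, (if i ∈ S n then ENNReal.ofReal ((2 * r i) ^ (b:ℝ)) else 0))
          ≤ ENNReal.ofReal (Cr * q ^ n) := by
        intro n
        by_cases hn : n < n1
        · rw [hempty n hn]; exact zero_le
        · push_neg at hn
          refine le_trans (hinner n) ?_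
          have h1 : (N:ℝ≥0∞) ^ (n+1+k0) * ENNReal.ofReal ((2 * R n) ^ (b:ℝ))
              = ENNReal.ofReal ((N:ℝ) ^ (n+1+k0) * (2 * R n) ^ (b:ℝ)) := by
            rw [ENNReal.ofReal_mul (by positivity), ENNReal.ofReal_pow (by positivity),
              ENNReal.ofReal_natCast]
          rw [h1]
          exact ENNReal.ofReal_le_ofReal (hchain n hn)
      calc (∑' i, ENNReal.ofReal ((2 * r i) ^ (b:ℝ)))
          ≤ ∑' (n : ℕ) (i : ℕ), (if i ∈ S n then ENNReal.ofReal ((2 * r i) ^ (b:ℝ)) else 0) := hmain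
        _ ≤ ∑' n : ℕ, ENNReal.ofReal (Cr * q ^ n) := ENNReal.tsum_le_tsum hw
        _ = ENNReal.ofReal (∑' n, Cr * q ^ n) :=
            (ENNReal.ofReal_tsum_of_nonneg (fun n => mul_nonneg hCr0.le (pow_nonneg hq0.le n))
              hsum_geo).symm
    have h1 : packMeasure (fun x => x ^ (b:ℝ)) E ≤ packPreδ (fun x => x ^ (b:ℝ)) E δ := by
      refine le_trans (packMeasure_le_packPre _ _) ?_
      rw [packPre]
      exact le_trans (iInf_le _ δ) (iInf_le _ hδ0)
    exact ne_top_of_le_ne_top ENNReal.ofReal_ne_top (le_trans h1 hfin)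
  have hNR : (0:ℝ) < (N:ℝ) := by exact_mod_cast hN0
  have hLower : ∀ b : ℝ≥0, (b : ℝ≥0∞) < L → packMeasure (fun x => x ^ (b:ℝ)) E = ⊤ := by
    intro b hb
    obtain ⟨b'', hb''0, hbb'', hb''L⟩ :
        ∃ b'' : ℝ, 0 ≤ b'' ∧ (b:ℝ) < b'' ∧ ENNReal.ofReal b'' < L := by
      rcases eq_or_ne L ⊤ with hLtop | hLtop
      · exact ⟨(b:ℝ) + 1, by positivity, by norm_num,
          by rw [hLtop]; exact ENNReal.ofReal_lt_top⟩
      · have h2 : (b:ℝ) < L.toReal := by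
          have := (ENNReal.toReal_lt_toReal ENNReal.coe_ne_top hLtop).2 hb
          simpa using this
        refine ⟨((b:ℝ) + L.toReal)/2, by positivity, by linarith, ?_⟩
        have h3 : ENNReal.ofReal (((b:ℝ)+L.toReal)/2) < ENNReal.ofReal L.toReal := by
          rw [ENNReal.ofReal_lt_ofReal_iff_of_nonneg (by positivity)]
          linarith
        rwa [ENNReal.ofReal_toReal hLtop] at h3
    have hfreq : ∃ᶠ n in Filter.atTop, ENNReal.ofReal b'' < u n :=
      Filter.frequently_lt_of_lt_limsup (by isBoundedDefault) hb''L
    have hkey2 : ∀ n, s n < 1 → ENNReal.ofReal b'' < u n → s n ^ (-b'') ≤ (N:ℝ) ^ n := by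
      intro n hs1 hlt
      simp only [hudef] at hlt
      have hlogs := Real.log_neg (hs n) hs1
      have h3 : b'' < -((n:ℝ) * Real.log N) / Real.log (s n) :=
        (ENNReal.ofReal_lt_ofReal_iff_of_nonneg hb''0).1 hlt
      have h5 : -((n:ℝ) * Real.log N) / Real.log (s n)
          = ((n:ℝ) * Real.log N) / (-Real.log (s n)) := by
        rw [div_neg, neg_div]
      rw [h5] at h3
      have h4 : b'' * (-Real.log (s n)) < (n:ℝ) * Real.log N :=
        (lt_div_iff₀ (by linarith)).1 h3
      have h6 : (N:ℝ) ^ n = Real.exp ((n:ℝ) * Real.log N) := by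
        rw [Real.exp_nat_mul, Real.exp_log hNR]
      have h7 : s n ^ (-b'') = Real.exp (b'' * (-Real.log (s n))) := by
        rw [Real.rpow_def_of_pos (hs n)]; ring_nf
      rw [h6, h7]
      exact Real.exp_le_exp.2 h4.le
    rw [packMeasure, iInf_eq_top]
    intro c
    rw [iInf_eq_top]
    intro hcover
    have hne : E.Nonempty := ⟨f (fun _ => ⟨0, by omega⟩), Set.mem_range_self _⟩
    haveI hns : Nonempty ↥E := hne.to_subtype
    haveI : CompactSpace ↥E := isCompact_iff_compactSpace.1 hEcomp
    obtain ⟨i0, hi0⟩ := nonempty_interior_of_iUnion_of_closed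
      (f := fun i : ℕ => (Subtype.val ⁻¹' closure (c i) : Set ↥E))
      (fun i => (isClosed_closure).preimage continuous_subtype_val)
      (Set.eq_univ_of_forall (fun z => by
        obtain ⟨i, hi⟩ := Set.mem_iUnion.1 (hcover z.2)
        exact Set.mem_iUnion.2 ⟨i, subset_closure hi⟩))
    obtain ⟨x0, hx0⟩ := hi0
    obtain ⟨ε, hε0, hball⟩ := Metric.isOpen_iff.1 isOpen_interior x0 hx0
    have hclos : ∀ y, y ∈ E → dist y (x0 : EuclideanSpace ℝ (Fin p)) < ε →
        y ∈ closure (c i0) := by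
      intro y hyE hyd
      have h1 : (⟨y, hyE⟩ : ↥E) ∈ Metric.ball x0 ε := by
        rw [Metric.mem_ball, Subtype.dist_eq]; exact hyd
      have h2 : (⟨y, hyE⟩ : ↥E) ∈ Subtype.val ⁻¹' closure (c i0) := interior_subset (hball h1)
      exact h2
    obtain ⟨σstar, hσstar⟩ := x0.2
    have hκR : Filter.Tendsto (fun n => κ * R n) Filter.atTop (nhds 0) := by
      simpa using hRtend.const_mul κ
    obtain ⟨m', hm'⟩ := (hκR.eventually_lt_const hε0).exists
    have hPδ : ∀ δ : ℝ, 0 < δ → packPreδ (fun x => x ^ (b:ℝ)) (c i0) δ = ⊤ := by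
      intro δ hδ0
      have hA : ∀ A : ℝ, ENNReal.ofReal A ≤ packPreδ (fun x => x ^ (b:ℝ)) (c i0) δ := by
        intro A
        set e2 := b'' - (b:ℝ) with he2def
        have he20 : 0 < e2 := by rw [he2def]; linarith
        set C2 := ((N:ℝ)^m')⁻¹ * (((1-M)*τ)/2) ^ (b:ℝ) with hC2def
        have hC20 : 0 < C2 :=
          mul_pos (inv_pos.2 (pow_pos hNR _)) (Real.rpow_pos_of_pos (by nlinarith) _)
        have hgrow : Filter.Tendsto (fun n : ℕ => C2 * (M^n * s 0)^(-e2))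
            Filter.atTop Filter.atTop := by
          have h1 : ∀ n : ℕ, ((M:ℝ)^n * s 0)^(-e2) = (M ^ (-e2))^n * (s 0)^(-e2) := by
            intro n
            rw [Real.mul_rpow (by positivity) (hs 0).le]
            congr 1
            rw [← Real.rpow_natCast M n, ← Real.rpow_mul hM0.le, mul_comm,
              Real.rpow_mul hM0.le, Real.rpow_natCast]
          have h2 : 1 < M ^ (-e2) := by
            rw [Real.rpow_neg hM0.le, one_lt_inv_iff₀]
            exact ⟨Real.rpow_pos_of_pos hM0 _, Real.rpow_lt_one hM0.le hM he20⟩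
          have h3 := (tendsto_pow_atTop_atTop_of_one_lt h2).atTop_mul_const
            (Real.rpow_pos_of_pos (hs 0) (-e2))
          have h4 : Filter.Tendsto (fun n : ℕ => ((M:ℝ)^n * s 0)^(-e2))
              Filter.atTop Filter.atTop := by
            refine h3.congr fun n => ?_
            rw [h1 n]
          exact h4.const_mul_atTop hC20
        have hev2 : ∀ᶠ n : ℕ in Filter.atTop, m' + 1 ≤ n ∧ s n < 1 ∧
            (1-M)*(τ * s n)/4 ≤ δ ∧ A ≤ C2 * ((M:ℝ)^n * s 0)^(-e2) := by
          have e1 := Filter.eventually_ge_atTop (m'+1)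
          have e2' : ∀ᶠ n : ℕ in Filter.atTop, s n < 1 :=
            hstend.eventually_lt_const (by norm_num)
          have e3 : ∀ᶠ n : ℕ in Filter.atTop, (1-M)*(τ * s n)/4 < δ := by
            have ht : Filter.Tendsto (fun n => (1-M)*(τ * s n)/4) Filter.atTop (nhds 0) := by
              have := hstend.const_mul ((1-M)*τ/4)
              simp only [mul_zero] at this
              refine this.congr fun n => by ring
            exact ht.eventually_lt_const hδ0
          have e4 := hgrow.eventually_ge_atTop A
          filter_upwards [e1, e2', e3, e4] with n h1 h2 h3 h4
          exact ⟨h1, h2, h3.le, h4⟩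
        obtain ⟨n, hun, hm'n, hsn1, hγδ, hA2⟩ := (hfreq.and_eventually hev2).exists
        have hkey3 : s n ^ (-b'') ≤ (N:ℝ)^n := hkey2 n hsn1 hun
        set sep := (1-M)*(τ * s n) with hsepdef
        have hsep0 : 0 < sep := by
          rw [hsepdef]; exact mul_pos (by linarith) (mul_pos hτ (hs n))
        set γ := sep/4 with hγdef
        have hγ0 : 0 < γ := by rw [hγdef]; linarith
        have hγδ' : γ ≤ δ := by rw [hγdef, hsepdef]; exact hγδ
        set σw : (Fin (n+1-m') → Fin N) → (ℕ → Fin N) := fun w t =>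
          if h2 : m' ≤ t ∧ t < n+1 then w ⟨t - m', by omega⟩ else σstar t with hσwdef
        have hσw_out : ∀ w t, ¬ (m' ≤ t ∧ t < n+1) → σw w t = σstar t := by
          intro w t ht; simp only [hσwdef, dif_neg ht]
        have hσw_mid : ∀ w t (h1 : m' ≤ t) (h2 : t < n+1),
            σw w t = w ⟨t - m', by omega⟩ := by
          intro w t h1 h2; simp only [hσwdef, dif_pos (And.intro h1 h2)]
        have hy_near : ∀ w, dist (f (σw w)) (x0 : EuclideanSpace ℝ (Fin p)) < ε := by
          intro w
          rw [dist_eq_norm, ← hσstar]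
          refine lt_of_le_of_lt (hdistle _ _ m' (fun t ht => ?_)) hm'
          exact hσw_out w t (by omega)
        have hy_sep : ∀ w w', w ≠ w' → sep ≤ ‖f (σw w) - f (σw w')‖ := by
          intro w w' hne'
          have hex2 : ∃ t, σw w t ≠ σw w' t := by
            obtain ⟨a, ha⟩ := Function.ne_iff.1 hne'
            refine ⟨m' + (a:ℕ), ?_⟩
            have h1 : m' ≤ m' + (a:ℕ) := by omega
            have h2 : m' + (a:ℕ) < n + 1 := by
              have h3 := a.isLt
              omega
            rw [hσw_mid w _ h1 h2, hσw_mid w' _ h1 h2]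
            have h3 : (⟨m' + (a:ℕ) - m', by omega⟩ : Fin (n+1-m')) = a := by
              apply Fin.ext; simp
            rw [h3]; exact ha
          have hk : σw w (Nat.find hex2) ≠ σw w' (Nat.find hex2) := Nat.find_spec hex2
          have hkmin : ∀ i, i < Nat.find hex2 → σw w i = σw w' i := by
            intro i hi
            have := Nat.find_min hex2 hi
            exact not_not.1 this
          have hkrange : Nat.find hex2 ≤ n := by
            by_contra hgt
            push_neg at hgt
            have h1 : ¬ (m' ≤ Nat.find hex2 ∧ Nat.find hex2 < n+1) := by omega
            exact hk (by rw [hσw_out w _ h1, hσw_out w' _ h1])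
          have hd := hdistge (σw w) (σw w') (Nat.find hex2) hkmin hk
          have hsk : s n ≤ s (Nat.find hex2) := hsanti hkrange
          rw [hsepdef]
          have hmono : (1-M)*(τ * s n) ≤ (1-M)*(τ * s (Nat.find hex2)) :=
            mul_le_mul_of_nonneg_left (mul_le_mul_of_nonneg_left hsk hτ.le) (by linarith)
          linarith
        have hz : ∀ w, ∃ z, z ∈ c i0 ∧ dist (f (σw w)) z < γ/2 := by
          intro w
          have h1 : f (σw w) ∈ closure (c i0) :=
            hclos _ (Set.mem_range_self _) (hy_near w)
          obtain ⟨z, hz1, hz2⟩ := Metric.mem_closure_iff.1 h1 (γ/2) (by linarith)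
          exact ⟨z, hz1, hz2⟩
        choose zw hzw1 hzw2 using hz
        have hzsep : ∀ w w', w ≠ w' → γ + γ ≤ dist (zw w) (zw w') := by
          intro w w' hne'
          have h1 := hy_sep w w' hne'
          have h2 := hzw2 w
          have h3 := hzw2 w'
          have h4 : dist (f (σw w)) (f (σw w')) ≤ dist (f (σw w)) (zw w)
              + dist (zw w) (zw w') + dist (zw w') (f (σw w')) := dist_triangle4 _ _ _ _
          have h5 : sep ≤ dist (f (σw w)) (f (σw w')) := by
            rw [dist_eq_norm]; exact h1
          have h6 : dist (zw w') (f (σw w')) = dist (f (σw w')) (zw w') := dist_comm _ _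
          rw [h6] at h4
          rw [hγdef]
          linarith
        have hKpos : 0 < Fintype.card (Fin (n+1-m') → Fin N) := by
          rw [Fintype.card_fun]
          simp only [Fintype.card_fin]
          exact pow_pos hN0 _
        set eqv := Fintype.equivFin (Fin (n+1-m') → Fin N) with heqvdef
        set w0 := eqv.symm ⟨0, hKpos⟩ with hw0def
        set K := Fintype.card (Fin (n+1-m') → Fin N) with hKdef
        set xfam : ℕ → EuclideanSpace ℝ (Fin p) := fun j =>
          if h : j < K then zw (eqv.symm ⟨j, h⟩) else zw w0 with hxfamdef
        set rfam : ℕ → ℝ := fun j => if j < K then γ else 0 with hrfamdef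
        have hxmem : ∀ j, xfam j ∈ c i0 := by
          intro j; rw [hxfamdef]; dsimp only; split <;> exact hzw1 _
        have hrad : ∀ j, 0 ≤ rfam j ∧ rfam j ≤ δ := by
          intro j; rw [hrfamdef]; dsimp only; split
          · exact ⟨hγ0.le, hγδ'⟩
          · exact ⟨le_rfl, hδ0.le⟩
        have hrval : ∀ j, j < K → rfam j = γ := by
          intro j hj; rw [hrfamdef]; dsimp only; rw [if_pos hj]
        have hrval0 : ∀ j, ¬ j < K → rfam j = 0 := by
          intro j hj; rw [hrfamdef]; dsimp only; rw [if_neg hj]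
        have hpair : Pairwise (Function.onFun Disjoint fun j => Metric.ball (xfam j) (rfam j)) := by
          intro i j hij
          show Disjoint (Metric.ball (xfam i) (rfam i)) (Metric.ball (xfam j) (rfam j))
          by_cases hi : i < K
          · by_cases hj : j < K
            · have hwne : eqv.symm ⟨i, hi⟩ ≠ eqv.symm ⟨j, hj⟩ := by
                intro hcon
                have := eqv.symm.injective hcon
                exact hij (by simpa using congrArg Fin.val this)
              have hd := hzsep _ _ hwne
              have hxi : xfam i = zw (eqv.symm ⟨i, hi⟩) := by
                rw [hxfamdef]; dsimp only; rw [dif_pos hi]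
              have hxj : xfam j = zw (eqv.symm ⟨j, hj⟩) := by
                rw [hxfamdef]; dsimp only; rw [dif_pos hj]
              rw [hxi, hxj, hrval i hi, hrval j hj]
              exact Metric.ball_disjoint_ball hd
            · have hbj : Metric.ball (xfam j) (rfam j) = ∅ := by
                rw [Metric.ball_eq_empty, hrval0 j hj]
              rw [hbj]; exact Set.disjoint_empty _
          · have hbi : Metric.ball (xfam i) (rfam i) = ∅ := by
              rw [Metric.ball_eq_empty, hrval0 i hi]
            rw [hbi]; exact Set.empty_disjoint _
        have h2γ : (2*γ) ^ (b:ℝ) = ((1-M)*τ/2) ^ (b:ℝ) * (s n) ^ (b:ℝ) := by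
          have h1 : 2*γ = ((1-M)*τ/2) * s n := by rw [hγdef, hsepdef]; ring
          rw [h1, Real.mul_rpow (by nlinarith) (hs n).le]
        have hcardK : ((K:ℕ):ℝ) = (N:ℝ)^(n+1-m') := by
          rw [hKdef, Fintype.card_fun]
          push_cast
          simp
        have hchain2 : A ≤ ((K:ℕ):ℝ) * (2*γ)^(b:ℝ) := by
          have st1 : ((M:ℝ)^n * s 0)^(-e2) ≤ (s n)^(-e2) :=
            Real.rpow_le_rpow_of_nonpos (hs n) (hspow n) (by linarith)
          have st2 : (s n)^(-e2) = (s n)^(-b'') * (s n)^(b:ℝ) := by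
            rw [← Real.rpow_add (hs n)]
            congr 1
            rw [he2def]; ring
          have st3 : C2 * ((M:ℝ)^n * s 0)^(-e2) ≤ C2 * ((N:ℝ)^n * (s n)^(b:ℝ)) := by
            refine mul_le_mul_of_nonneg_left ?_ hC20.le
            rw [st2] at st1
            refine le_trans st1 ?_
            exact mul_le_mul_of_nonneg_right hkey3 (Real.rpow_nonneg (hs n).le _)
          have hpow2 : ((N:ℝ)^m')⁻¹ * (N:ℝ)^n ≤ (N:ℝ)^(n+1-m') := by
            rw [inv_mul_le_iff₀ (pow_pos hNR m'), ← pow_add]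
            refine pow_le_pow_right₀ (by exact_mod_cast hN0) (by omega)
          have st4 : C2 * ((N:ℝ)^n * (s n)^(b:ℝ)) ≤ (N:ℝ)^(n+1-m') * (2*γ)^(b:ℝ) := by
            have hrnn : (0:ℝ) ≤ (s n)^(b:ℝ) := Real.rpow_nonneg (hs n).le _
            have hrnn2 : (0:ℝ) ≤ ((1-M)*τ/2) ^ (b:ℝ) := Real.rpow_nonneg (by nlinarith) _
            calc C2 * ((N:ℝ)^n * (s n)^(b:ℝ))
                = (((N:ℝ)^m')⁻¹ * (N:ℝ)^n) * (((1-M)*τ/2) ^ (b:ℝ) * (s n)^(b:ℝ)) := by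
                  rw [hC2def]; ring
              _ ≤ (N:ℝ)^(n+1-m') * (((1-M)*τ/2) ^ (b:ℝ) * (s n)^(b:ℝ)) := by
                  refine mul_le_mul_of_nonneg_right hpow2 (mul_nonneg hrnn2 hrnn)
              _ = (N:ℝ)^(n+1-m') * (2*γ)^(b:ℝ) := by rw [h2γ]
          rw [hcardK]
          exact le_trans hA2 (le_trans st3 st4)
        have hsum1 : ENNReal.ofReal A ≤ ∑' j : ℕ, ENNReal.ofReal ((2 * rfam j) ^ (b:ℝ)) := by
          refine le_trans (ENNReal.ofReal_le_ofReal hchain2) ?_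
          rw [ENNReal.ofReal_mul (by exact_mod_cast Nat.cast_nonneg K), ENNReal.ofReal_natCast]
          have hterm : ∀ j ∈ Finset.range K,
              ENNReal.ofReal ((2 * rfam j)^(b:ℝ)) = ENNReal.ofReal ((2*γ)^(b:ℝ)) := by
            intro j hj
            rw [hrval j (Finset.mem_range.1 hj)]
          calc (K : ℝ≥0∞) * ENNReal.ofReal ((2*γ)^(b:ℝ))
              = ∑ j ∈ Finset.range K, ENNReal.ofReal ((2 * rfam j)^(b:ℝ)) := by
                rw [Finset.sum_congr rfl hterm, Finset.sum_const, Finset.card_range, nsmul_eq_mul]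
            _ ≤ ∑' j : ℕ, ENNReal.ofReal ((2 * rfam j)^(b:ℝ)) := ENNReal.sum_le_tsum _
        refine le_trans hsum1 ?_
        rw [packPreδ]
        exact le_iSup_of_le xfam (le_iSup_of_le rfam (le_iSup_of_le hxmem
          (le_iSup_of_le hrad (le_iSup_of_le hpair le_rfl))))
      by_contra hne2
      have h1 := hA ((packPreδ (fun x => x ^ (b:ℝ)) (c i0) δ).toReal + 1)
      have h2 : packPreδ (fun x => x ^ (b:ℝ)) (c i0) δ
          < ENNReal.ofReal ((packPreδ (fun x => x ^ (b:ℝ)) (c i0) δ).toReal + 1) := by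
        conv_lhs => rw [← ENNReal.ofReal_toReal hne2]
        rw [ENNReal.ofReal_lt_ofReal_iff_of_nonneg ENNReal.toReal_nonneg]
        linarith
      exact absurd h1 (not_le.2 h2)
    have hPre : packPre (fun x => x ^ (b:ℝ)) (c i0) = ⊤ := by
      rw [packPre, iInf_eq_top]
      intro δ
      rw [iInf_eq_top]
      intro hδ
      exact hPδ δ hδ
    exact eq_top_iff.2 (le_trans (le_of_eq hPre.symm) (ENNReal.le_tsum i0))
  rw [packDim]
  apply le_antisymm
  · refine iSup_le fun b => iSup_le fun hbP => ?_
    by_contra hgt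
    push_neg at hgt
    exact hUpper b hgt hbP
  · refine ENNReal.le_of_forall_nnreal_lt fun b hbL => ?_
    exact le_iSup_of_le b (le_iSup_of_le (hLower b hbL) le_rfl)
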